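/- Let N > 0, d > 0 and let B be a valid matrix of W_d(N). Then W_d^B(N) contains a unique τ-monotonic composition, and this composition is lexicographically the largest element of W_d^B(N) and has weight strictly smaller than the weight of every other element of W_d^B(N). In particular, every modest composition and every optimal composition in W_d(N) is τ-monotonic. -/

import Mathlib

open Polynomial

/-- The power sum `S_d(-k) = ∑_{a monic, deg a = d} a^k`, written as a sum over the
lower-order coefficients of the monic polynomial. -/
noncomputable def powerSum (Fq : Type) [Field Fq] [Fintype Fq] (d k : ℕ) : Polynomial Fq :=
  ∑ c : Fin d → Fq, (X ^ d + ∑ i : Fin d, C (c i) * X ^ (i : ℕ)) ^ k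

/-- `m` sums to `k` with no carrying of digits in base `p`. -/
def NoCarry (p : ℕ) {n : ℕ} (m : Fin n → ℕ) (k : ℕ) : Prop :=
  (∑ i, m i) = k ∧ ∀ j : ℕ, (∑ i, m i / p ^ j % p) = k / p ^ j % p

/-- The set `U_d(k)`. -/
def Uset (p q d k : ℕ) : Set (Fin (d + 1) → ℕ) :=
  {m | NoCarry p m k ∧ ∀ i : Fin (d + 1), 0 < (i : ℕ) → 0 < m i ∧ (q - 1) ∣ m i}

/-- The weight of an element of `U_d(k)`. -/
def wtU {d : ℕ} (m : Fin (d + 1) → ℕ) : ℕ :=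
  ∑ i : Fin (d + 1), (d - (i : ℕ)) * m i

/-- Strict lexicographic order on tuples. -/
def LexLT {n : ℕ} (x y : Fin n → ℕ) : Prop :=
  ∃ i, (∀ j, j < i → x j = y j) ∧ x i < y i

/-- Lexicographic order on tuples. -/
def LexLE {n : ℕ} (x y : Fin n → ℕ) : Prop := x = y ∨ LexLT x y

/-- `L_k := min_{0 ≤ i < f} l(k p^i)/(q-1)` where `l` is the base-`q` digit sum, `q = p^f`. -/
noncomputable def Lval (p f k : ℕ) (hf : 0 < f) : ℚ :=
  (Finset.range f).inf' ⟨0, Finset.mem_range.mpr hf⟩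
    (fun i => ((Nat.digits (p ^ f) (k * p ^ i)).sum : ℚ) / ((p : ℚ) ^ f - 1))

/-- The set `W_d(N)` of compositions. -/
def Wset (p q d N : ℕ) : Set (Fin d → ℕ) :=
  {Y | NoCarry p Y N ∧ ∀ i : Fin d, (i : ℕ) + 1 < d → 0 < Y i ∧ (q - 1) ∣ Y i}

/-- The weight of a composition. -/
def wtW {d : ℕ} (Y : Fin d → ℕ) : ℕ := ∑ i : Fin d, ((i : ℕ) + 1) * Y i

/-- `X` is the modest (lexicographically largest) composition in `W_d(N)`. -/
def Modest (p q : ℕ) {d : ℕ} (N : ℕ) (X : Fin d → ℕ) : Prop :=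
  X ∈ Wset p q d N ∧ ∀ Y ∈ Wset p q d N, LexLE Y X

/-- `X` is an optimal (minimum weight) composition in `W_d(N)`. -/
def Optimal (p q : ℕ) {d : ℕ} (N : ℕ) (X : Fin d → ℕ) : Prop :=
  X ∈ Wset p q d N ∧ ∀ Y ∈ Wset p q d N, wtW X ≤ wtW Y

/-- `Γ(n) : Fin f → ℕ`, summing the base-`p` digits of `n` in each residue class mod `f`. -/
def Gamma (p f n : ℕ) : Fin f → ℕ :=
  fun i => ∑ j ∈ Finset.range (Nat.log p n + 1), if j % f = (i : ℕ) then n / p ^ j % p else 0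

/-- The cyclic matrix `E`, as a map: `(E x)_i = p x_{i+1} - x_i`, indices mod `f`. -/
def Emap (p : ℕ) {R : Type} [Ring R] {f : ℕ} (x : Fin f → R) : Fin f → R :=
  fun i => (p : R) * x ⟨((i : ℕ) + 1) % f, Nat.mod_lt _ i.pos⟩ - x i

/-- `𝔍 = {Γ(n) : n > 0 is q-even}`, where `q = p ^ f`. -/
def Jfrak (p f : ℕ) : Set (Fin f → ℕ) :=
  {w | ∃ n : ℕ, 0 < n ∧ (p ^ f - 1) ∣ n ∧ Gamma p f n = w}

/-- `I_d`. -/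
def Iset (p f d : ℕ) : Set (Fin f → ℕ) :=
  {u | (∃ n : ℕ, 0 < n ∧ Gamma p f n = u) ∧
    ∃ v : Fin (d - 1) → Fin f → ℕ, (∀ j, v j ∈ Jfrak p f) ∧ (∑ j, v j) < u}

/-- `J_d`. -/
def Jset (p f d : ℕ) : Set (Fin f → ℕ) :=
  if d = 0 then ∅ else Jfrak p f ∩ (Iset p f d \ Iset p f (d + 1))

/-- A composition is `τ`-monotonic. -/
def TauMonotonic (p f : ℕ) {d : ℕ} (X : Fin d → ℕ) : Prop :=
  ∀ i j : Fin d, i < j → ∀ m n : ℕ, X i / p ^ m % p ≠ 0 → X j / p ^ n % p ≠ 0 →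
    m % f = n % f → n ≤ m

/-- `W_d^B(N)`: compositions in `W_d(N)` whose `Γ`-matrix is `B`. -/
def WBset (p f d N : ℕ) (B : Fin d → Fin f → ℕ) : Set (Fin d → ℕ) :=
  {Y | Y ∈ Wset p (p ^ f) d N ∧ ∀ j, Gamma p f (Y j) = B j}

/-- The multizeta value `ζ(-k_1, …, -k_r)` as a (finite) sum over strictly
decreasing tuples of degrees. -/
noncomputable def multizeta (Fq : Type) [Field Fq] [Fintype Fq] {r : ℕ} (k : Fin r → ℕ) :
    Polynomial Fq :=
  ∑ᶠ (dt : Fin r → ℕ) (_ : StrictAnti dt), ∏ i, powerSum Fq (dt i) (k i)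

namespace TauAux

/-- digit of `x` in base `p` at position `j`. -/
def dgt (p x j : ℕ) : ℕ := x / p ^ j % p

/-- value of a digit function up to `M`. -/
def val (p : ℕ) (b : ℕ → ℕ) (M : ℕ) : ℕ := ∑ j ∈ Finset.range M, b j * p ^ j

lemma dgt_lt {p : ℕ} (hp : 1 < p) (x j : ℕ) : dgt p x j < p :=
  Nat.mod_lt _ (by omega)

lemma dgt_eq_zero {p x j : ℕ} (h : x < p ^ j) : dgt p x j = 0 := by
  simp [dgt, Nat.div_eq_of_lt h]

lemma pow_le_of_dgt_ne {p x j : ℕ} (h : dgt p x j ≠ 0) : p ^ j ≤ x := by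
  by_contra hc
  exact h (dgt_eq_zero (by omega))

lemma val_lt {p : ℕ} (hp : 1 < p) {b : ℕ → ℕ} (hb : ∀ j, b j < p) (M : ℕ) :
    val p b M < p ^ M := by
  induction M with
  | zero => simp [val]
  | succ M ih =>
    rw [val, Finset.sum_range_succ, ← val]
    have h1 : b M ≤ p - 1 := by have := hb M; omega
    calc val p b M + b M * p ^ M < p ^ M + b M * p ^ M := by omega
      _ ≤ p ^ M + (p - 1) * p ^ M := by
          have := Nat.mul_le_mul_right (p ^ M) h1; omega
      _ = p ^ (M + 1) := by
          rw [Nat.sub_one_mul, pow_succ, mul_comm (p ^ M) p]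
          have : p ^ M ≤ p * p ^ M := Nat.le_mul_of_pos_left _ (by omega)
          omega

lemma dgt_val {p : ℕ} (hp : 1 < p) {b : ℕ → ℕ} (hb : ∀ j, b j < p) (M j : ℕ) :
    dgt p (val p b M) j = if j < M then b j else 0 := by
  induction M generalizing j with
  | zero => simp [val, dgt]
  | succ M ih =>
    rw [val, Finset.sum_range_succ, ← val]
    have hv : val p b M < p ^ M := val_lt hp hb M
    rcases lt_trichotomy j M with h | h | h
    · have hj : M - j - 1 + 1 + j = M := by omega
      have e0 : p ^ M = p ^ (M - j - 1) * p * p ^ j := by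
        calc p ^ M = p ^ (M - j - 1 + 1 + j) := by rw [hj]
          _ = p ^ (M - j - 1) * p * p ^ j := by rw [pow_add, pow_succ]
      have e1 : val p b M + b M * p ^ M = val p b M + b M * p ^ (M - j - 1) * p * p ^ j := by
        rw [e0]; ring
      rw [dgt, e1]
      rw [Nat.add_mul_div_right _ _ (pow_pos (by omega : 0 < p) j)]
      rw [Nat.add_mul_mod_self_right]
      have := ih j
      simp only [dgt] at this
      rw [this]
      simp [h, Nat.lt_succ_of_lt h]
    · subst h
      rw [dgt, Nat.add_mul_div_right _ _ (pow_pos (by omega : 0 < p) j),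
        Nat.div_eq_of_lt hv]
      simp [Nat.mod_eq_of_lt (hb j)]
    · have hlt : val p b M + b M * p ^ M < p ^ j := by
        have h2 : val p b (M + 1) < p ^ (M + 1) := val_lt hp hb (M + 1)
        rw [val, Finset.sum_range_succ, ← val] at h2
        exact lt_of_lt_of_le h2 (Nat.pow_le_pow_right (by omega) (by omega))
      rw [dgt_eq_zero hlt, if_neg (by omega : ¬ (j < M + 1))]

lemma val_dgt_mod {p : ℕ} (hp : 1 < p) (M x : ℕ) :
    val p (fun j => dgt p x j) M = x % p ^ M := by
  induction M with
  | zero => simp [val, Nat.mod_one]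
  | succ M ih =>
    rw [val, Finset.sum_range_succ, ← val, ih]
    have key : x % p ^ (M + 1) = x % p ^ M + dgt p x M * p ^ M := by
      have h1 : x = p ^ M * (x / p ^ M) + x % p ^ M := (Nat.div_add_mod _ _).symm
      have h2 : x / p ^ M = p * (x / p ^ (M + 1)) + dgt p x M := by
        have := (Nat.div_add_mod (x / p ^ M) p).symm
        rw [Nat.div_div_eq_div_mul, ← pow_succ] at this
        exact this
      have h3 : x = p ^ (M + 1) * (x / p ^ (M + 1)) + (x % p ^ M + dgt p x M * p ^ M) := by
        calc x = p ^ M * (x / p ^ M) + x % p ^ M := h1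
          _ = p ^ M * (p * (x / p ^ (M + 1)) + dgt p x M) + x % p ^ M := by rw [← h2]
          _ = p ^ (M + 1) * (x / p ^ (M + 1)) + (x % p ^ M + dgt p x M * p ^ M) := by
              ring
      have h4 : x % p ^ M + dgt p x M * p ^ M < p ^ (M + 1) := by
        have ha : x % p ^ M < p ^ M := Nat.mod_lt _ (pow_pos (by omega : 0 < p) M)
        have hbb : dgt p x M ≤ p - 1 := by have := dgt_lt hp x M; omega
        have := Nat.mul_le_mul_right (p ^ M) hbb
        rw [Nat.sub_one_mul] at this
        have h5 : p ^ M ≤ p * p ^ M := Nat.le_mul_of_pos_left _ (by omega)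
        rw [pow_succ, mul_comm (p ^ M) p]
        omega
      conv_lhs => rw [h3]
      rw [Nat.mul_add_mod, Nat.mod_eq_of_lt h4]
    omega

lemma val_dgt {p : ℕ} (hp : 1 < p) {M x : ℕ} (h : x < p ^ M) :
    val p (fun j => dgt p x j) M = x := by
  rw [val_dgt_mod hp, Nat.mod_eq_of_lt h]


def swapFn (g : ℕ → ℕ) (m n : ℕ) : ℕ → ℕ :=
  fun j => if j = m then g m - 1 else if j = n then g n + 1 else g j

lemma val_swapFn {p : ℕ} {g : ℕ → ℕ} {m n M : ℕ} (hm : m < M) (hn : n < M) (hmn : m ≠ n)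
    (hgm : 1 ≤ g m) : val p (swapFn g m n) M + p ^ m = val p g M + p ^ n := by
  have hmm : m ∈ Finset.range M := Finset.mem_range.mpr hm
  have hnn : n ∈ (Finset.range M).erase m :=
    Finset.mem_erase.mpr ⟨Ne.symm hmn, Finset.mem_range.mpr hn⟩
  unfold val
  rw [← Finset.add_sum_erase _ (fun j => swapFn g m n j * p ^ j) hmm,
      ← Finset.add_sum_erase _ (fun j => swapFn g m n j * p ^ j) hnn,
      ← Finset.add_sum_erase _ (fun j => g j * p ^ j) hmm,
      ← Finset.add_sum_erase _ (fun j => g j * p ^ j) hnn]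
  have hrest : ∑ j ∈ ((Finset.range M).erase m).erase n, swapFn g m n j * p ^ j
      = ∑ j ∈ ((Finset.range M).erase m).erase n, g j * p ^ j := by
    refine Finset.sum_congr rfl fun j hj => ?_
    have h1 : j ≠ n := (Finset.mem_erase.mp hj).1
    have h2 : j ≠ m := (Finset.mem_erase.mp (Finset.mem_erase.mp hj).2).1
    simp [swapFn, h1, h2]
  rw [hrest]
  have e1 : swapFn g m n m = g m - 1 := by simp [swapFn]
  have e2 : swapFn g m n n = g n + 1 := by simp [swapFn, Ne.symm hmn]
  rw [e1, e2]
  obtain ⟨c, hc⟩ : ∃ c, g m = c + 1 := ⟨g m - 1, by omega⟩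
  rw [hc]
  simp only [Nat.add_sub_cancel]
  ring

lemma sum_swapFn_ite {f : ℕ} {g : ℕ → ℕ} {m n M : ℕ} (hm : m < M) (hn : n < M) (hmn : m ≠ n)
    (hgm : 1 ≤ g m) (hcl : m % f = n % f) (r : ℕ) :
    (∑ j ∈ Finset.range M, if j % f = r then swapFn g m n j else 0)
      = ∑ j ∈ Finset.range M, if j % f = r then g j else 0 := by
  have hmm : m ∈ Finset.range M := Finset.mem_range.mpr hm
  have hnn : n ∈ (Finset.range M).erase m :=
    Finset.mem_erase.mpr ⟨Ne.symm hmn, Finset.mem_range.mpr hn⟩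
  rw [← Finset.add_sum_erase _ (fun j => if j % f = r then swapFn g m n j else 0) hmm,
      ← Finset.add_sum_erase _ (fun j => if j % f = r then swapFn g m n j else 0) hnn,
      ← Finset.add_sum_erase _ (fun j => if j % f = r then g j else 0) hmm,
      ← Finset.add_sum_erase _ (fun j => if j % f = r then g j else 0) hnn]
  have hrest : (∑ j ∈ ((Finset.range M).erase m).erase n, if j % f = r then swapFn g m n j else 0)
      = ∑ j ∈ ((Finset.range M).erase m).erase n, if j % f = r then g j else 0 := by
    refine Finset.sum_congr rfl fun j hj => ?_
    have h1 : j ≠ n := (Finset.mem_erase.mp hj).1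
    have h2 : j ≠ m := (Finset.mem_erase.mp (Finset.mem_erase.mp hj).2).1
    simp [swapFn, h1, h2]
  rw [hrest]
  have e1 : swapFn g m n m = g m - 1 := by simp [swapFn]
  have e2 : swapFn g m n n = g n + 1 := by simp [swapFn, Ne.symm hmn]
  rw [e1, e2]
  by_cases hr : m % f = r
  · rw [if_pos hr, if_pos hr, if_pos (hcl ▸ hr), if_pos (hcl ▸ hr)]
    omega
  · rw [if_neg hr, if_neg hr, if_neg (hcl ▸ hr), if_neg (hcl ▸ hr)]

lemma gamma_eq {p f n M : ℕ} (hp : 1 < p) (hM : 0 < M) (hn : n < p ^ M) (i : Fin f) :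
    Gamma p f n i = ∑ j ∈ Finset.range M, if j % f = (i : ℕ) then dgt p n j else 0 := by
  have hsub : Finset.range (Nat.log p n + 1) ⊆ Finset.range M := by
    intro j hj
    simp only [Finset.mem_range] at hj ⊢
    rcases eq_or_ne n 0 with h0 | h0
    · subst h0; simp [Nat.log_zero_right] at hj; omega
    · have := Nat.log_lt_of_lt_pow h0 hn; omega
  unfold Gamma
  refine Finset.sum_subset hsub fun j hj hj2 => ?_
  simp only [Finset.mem_range] at hj hj2
  have hnj : n < p ^ j :=
    lt_of_lt_of_le (Nat.lt_pow_succ_log_self hp n) (Nat.pow_le_pow_right (by omega) (by omega))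
  have hz : n / p ^ j % p = 0 := dgt_eq_zero hnj
  simp [hz]

lemma pow_modEq_of_class {p f m n : ℕ} (hp : 0 < p) (h : m % f = n % f) :
    p ^ m ≡ p ^ n [MOD p ^ f - 1] := by
  have hpf : 1 ≤ p ^ f := Nat.one_le_pow _ _ hp
  have key : ∀ j : ℕ, p ^ j ≡ p ^ (j % f) [MOD p ^ f - 1] := by
    intro j
    conv_lhs => rw [← Nat.div_add_mod j f]
    rw [pow_add, pow_mul]
    have h1 : p ^ f ≡ 1 [MOD p ^ f - 1] := ((Nat.modEq_iff_dvd' hpf).mpr dvd_rfl).symm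
    calc (p ^ f) ^ (j / f) * p ^ (j % f)
        ≡ 1 ^ (j / f) * p ^ (j % f) [MOD p ^ f - 1] := ((h1.pow _).mul_right _)
      _ = p ^ (j % f) := by rw [one_pow, one_mul]
  exact (key m).trans (h ▸ (key n).symm)

/-- partial class sums of digits from position `j` up to `M`. -/
def Dc (p f M x j : ℕ) : ℕ :=
  ∑ j' ∈ Finset.Ico j M, if j' % f = j % f then dgt p x j' else 0

lemma Dc_step {p f M x : ℕ} (hp : 1 < p) (hf : 0 < f) (hx : x < p ^ M) (j : ℕ) :
    Dc p f M x j = dgt p x j + Dc p f M x (j + f) := by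
  rcases le_or_gt M j with h | h
  · have h0 : Dc p f M x j = 0 := by
      unfold Dc; rw [Finset.Ico_eq_empty (by omega)]; simp
    have h1 : Dc p f M x (j + f) = 0 := by
      unfold Dc; rw [Finset.Ico_eq_empty (by omega)]; simp
    have h2 : dgt p x j = 0 :=
      dgt_eq_zero (lt_of_lt_of_le hx (Nat.pow_le_pow_right (by omega) h))
    omega
  · unfold Dc
    have hmod : (j + f) % f = j % f := Nat.add_mod_right j f
    simp only [hmod]
    have hsub : Finset.Ico (j + f) M ⊆ Finset.Ico j M := Finset.Ico_subset_Ico (by omega) le_rfl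
    rw [← Finset.sum_sdiff hsub]
    have hset : Finset.Ico j M \ Finset.Ico (j + f) M = Finset.Ico j (min (j + f) M) := by
      ext a
      simp only [Finset.mem_sdiff, Finset.mem_Ico, lt_min_iff]
      omega
    have key : (∑ j' ∈ Finset.Ico j M \ Finset.Ico (j + f) M,
        if j' % f = j % f then dgt p x j' else 0) = dgt p x j := by
      rw [hset]
      rw [Finset.sum_eq_single_of_mem j (Finset.mem_Ico.mpr ⟨le_rfl, lt_min_iff.mpr ⟨by omega, h⟩⟩)]
      · rw [if_pos rfl]
      · intro b hb hbj
        have hbm := Finset.mem_Ico.mp hb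
        rw [if_neg]
        intro hbc
        have hdvd : f ∣ b - j := (Nat.modEq_iff_dvd' hbm.1).mp (Nat.ModEq.symm hbc)
        have := Nat.eq_zero_of_dvd_of_lt hdvd (by omega)
        omega
    omega

lemma fin_sum_step {d : ℕ} (v : Fin d → ℕ) (i : Fin d) :
    (∑ i' : Fin d, if (i' : ℕ) < (i : ℕ) + 1 then v i' else 0)
      = (∑ i' : Fin d, if (i' : ℕ) < (i : ℕ) then v i' else 0) + v i := by
  have h1 : ∀ i' : Fin d, (if (i' : ℕ) < (i : ℕ) + 1 then v i' else 0)
      = (if (i' : ℕ) < (i : ℕ) then v i' else 0) + (if i' = i then v i' else 0) := by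
    intro i'
    rcases lt_trichotomy ((i' : ℕ)) ((i : ℕ)) with h | h | h
    · rw [if_pos (by omega), if_pos h, if_neg (fun he => by subst he; omega), add_zero]
    · have he : i' = i := Fin.ext h
      subst he
      rw [if_pos (by omega), if_neg (by omega), if_pos rfl, zero_add]
    · rw [if_neg (by omega), if_neg (by omega), if_neg (fun he => by subst he; omega), add_zero]
  rw [Finset.sum_congr rfl fun i' _ => h1 i', Finset.sum_add_distrib,
    Finset.sum_ite_eq' Finset.univ i v, if_pos (Finset.mem_univ i)]

lemma lexLT_trans {n : ℕ} {x y z : Fin n → ℕ} (h1 : LexLT x y) (h2 : LexLT y z) :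
    LexLT x z := by
  obtain ⟨i, hxy, hi⟩ := h1
  obtain ⟨i', hyz, hi'⟩ := h2
  rcases lt_trichotomy i i' with h | h | h
  · exact ⟨i, fun j hj => (hxy j hj).trans (hyz j (hj.trans h)), by rw [← hyz i h]; exact hi⟩
  · subst h
    exact ⟨i, fun j hj => (hxy j hj).trans (hyz j hj), hi.trans hi'⟩
  · exact ⟨i', fun j hj => (hxy j (hj.trans h)).trans (hyz j hj), by rw [hxy i' h]; exact hi'⟩

lemma lexLT_irrefl {n : ℕ} {x : Fin n → ℕ} (h : LexLT x x) : False := by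
  obtain ⟨i, _, hi⟩ := h
  omega

lemma tau_F {p f d N M : ℕ} (hp : 1 < p) (hf : 0 < f) (hM0 : 0 < M) (hM : N < p ^ M)
    {B : Fin d → Fin f → ℕ} {Y : Fin d → ℕ} (hY : Y ∈ WBset p f d N B)
    (hτ : TauMonotonic p f Y) (k j : ℕ) :
    (∑ i : Fin d, if (i : ℕ) < k then Dc p f M (Y i) j else 0)
      = min (∑ i : Fin d, if (i : ℕ) < k then B i ⟨j % f, Nat.mod_lt _ hf⟩ else 0)
          (Dc p f M N j) := by
  obtain ⟨⟨⟨hsum, hcol⟩, hmem⟩, hGam⟩ := hY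
  have hcol' : ∀ t, (∑ i : Fin d, dgt p (Y i) t) = dgt p N t := hcol
  have hYle : ∀ i, Y i ≤ N := fun i =>
    hsum ▸ Finset.single_le_sum (f := Y) (fun _ _ => Nat.zero_le _) (Finset.mem_univ i)
  have hYlt : ∀ i, Y i < p ^ M := fun i => lt_of_le_of_lt (hYle i) hM
  have hB : ∀ i : Fin d, B i ⟨j % f, Nat.mod_lt _ hf⟩
      = ∑ j' ∈ Finset.range M, if j' % f = j % f then dgt p (Y i) j' else 0 := by
    intro i
    rw [← hGam i]
    exact gamma_eq hp hM0 (hYlt i) _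
  have hDcB : ∀ i : Fin d, Dc p f M (Y i) j ≤ B i ⟨j % f, Nat.mod_lt _ hf⟩ := by
    intro i
    rw [hB i]
    unfold Dc
    refine Finset.sum_le_sum_of_subset ?_
    intro a ha
    simp only [Finset.mem_Ico] at ha
    simp only [Finset.mem_range]
    omega
  have hFull : (∑ i : Fin d, Dc p f M (Y i) j) = Dc p f M N j := by
    unfold Dc
    rw [Finset.sum_comm]
    refine Finset.sum_congr rfl fun j' _ => ?_
    by_cases h : j' % f = j % f
    · simp only [if_pos h]
      exact hcol' j'
    · simp [h]
  have hle1 : (∑ i : Fin d, if (i : ℕ) < k then Dc p f M (Y i) j else 0) ≤ Dc p f M N j := by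
    rw [← hFull]
    refine Finset.sum_le_sum fun i _ => ?_
    split_ifs
    · exact le_rfl
    · exact Nat.zero_le _
  have hle2 : (∑ i : Fin d, if (i : ℕ) < k then Dc p f M (Y i) j else 0)
      ≤ ∑ i : Fin d, if (i : ℕ) < k then B i ⟨j % f, Nat.mod_lt _ hf⟩ else 0 := by
    refine Finset.sum_le_sum fun i _ => ?_
    split_ifs with h
    · exact hDcB i
    · exact le_rfl
  refine le_antisymm (le_min hle2 hle1) ?_
  rcases lt_or_ge (∑ i : Fin d, if (i : ℕ) < k then Dc p f M (Y i) j else 0)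
      (∑ i : Fin d, if (i : ℕ) < k then B i ⟨j % f, Nat.mod_lt _ hf⟩ else 0) with h | h
  · have hex : ∃ i0 : Fin d, (i0 : ℕ) < k ∧ Dc p f M (Y i0) j < B i0 ⟨j % f, Nat.mod_lt _ hf⟩ := by
      by_contra hc
      push_neg at hc
      have hterm : ∀ i : Fin d, (if (i : ℕ) < k then B i ⟨j % f, Nat.mod_lt _ hf⟩ else 0)
          ≤ (if (i : ℕ) < k then Dc p f M (Y i) j else 0) := by
        intro i
        split_ifs with hik
        · exact hc i hik
        · exact le_rfl
      have hge := Finset.sum_le_sum (s := (Finset.univ : Finset (Fin d))) fun i _ => hterm i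
      omega
    obtain ⟨i0, hi0k, hi0⟩ := hex
    have hn : ∃ nn, nn < j ∧ nn % f = j % f ∧ dgt p (Y i0) nn ≠ 0 := by
      have hBi0 := hB i0
      have hDceq : Dc p f M (Y i0) j
          = ∑ j' ∈ Finset.Ico j M, if j' % f = j % f then dgt p (Y i0) j' else 0 := rfl
      rcases le_or_gt j M with hjM | hjM
      · have hsplit : (∑ j' ∈ Finset.Ico 0 j, if j' % f = j % f then dgt p (Y i0) j' else 0)
            + (∑ j' ∈ Finset.Ico j M, if j' % f = j % f then dgt p (Y i0) j' else 0)
            = ∑ j' ∈ Finset.Ico 0 M, if j' % f = j % f then dgt p (Y i0) j' else 0 :=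
          Finset.sum_Ico_consecutive _ (Nat.zero_le j) hjM
        rw [Finset.range_eq_Ico] at hBi0
        have hlow : (∑ j' ∈ Finset.Ico 0 j, if j' % f = j % f then dgt p (Y i0) j' else 0) ≠ 0 := by
          omega
        obtain ⟨nn, hnnmem, hnn⟩ := Finset.exists_ne_zero_of_sum_ne_zero hlow
        have hnnj := (Finset.mem_Ico.mp hnnmem).2
        by_cases hc : nn % f = j % f
        · exact ⟨nn, hnnj, hc, by rwa [if_pos hc] at hnn⟩
        · rw [if_neg hc] at hnn
          exact absurd rfl hnn
      · have hDc0 : Dc p f M (Y i0) j = 0 := by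
          unfold Dc
          rw [Finset.Ico_eq_empty (by omega)]
          simp
        have hne : (∑ j' ∈ Finset.range M, if j' % f = j % f then dgt p (Y i0) j' else 0) ≠ 0 := by
          omega
        obtain ⟨nn, hnnmem, hnn⟩ := Finset.exists_ne_zero_of_sum_ne_zero hne
        have hnnM := Finset.mem_range.mp hnnmem
        by_cases hc : nn % f = j % f
        · exact ⟨nn, by omega, hc, by rwa [if_pos hc] at hnn⟩
        · rw [if_neg hc] at hnn
          exact absurd rfl hnn
    obtain ⟨nn, hnnj, hnncl, hnn0⟩ := hn
    have hvan : ∀ i' : Fin d, ¬ ((i' : ℕ) < k) → Dc p f M (Y i') j = 0 := by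
      intro i' hik
      unfold Dc
      refine Finset.sum_eq_zero fun j' hj' => ?_
      split_ifs with hcl2
      · by_contra hne
        have hii : i0 < i' := Fin.lt_def.mpr (by omega)
        have hle := hτ i0 i' hii nn j' hnn0 hne (by rw [hnncl, hcl2])
        have hj'M := Finset.mem_Ico.mp hj'
        omega
      · rfl
    have heq2 : (∑ i : Fin d, if (i : ℕ) < k then Dc p f M (Y i) j else 0)
        = ∑ i : Fin d, Dc p f M (Y i) j := by
      refine Finset.sum_congr rfl fun i _ => ?_
      split_ifs with hik
      · rfl
      · exact (hvan i hik).symm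
    rw [heq2, hFull]
    exact min_le_right _ _
  · exact le_trans (min_le_left _ _) h

lemma tau_unique {p f d N : ℕ} (hp : 1 < p) (hf : 0 < f)
    {B : Fin d → Fin f → ℕ} {Y Z : Fin d → ℕ}
    (hY : Y ∈ WBset p f d N B) (hZ : Z ∈ WBset p f d N B)
    (hτY : TauMonotonic p f Y) (hτZ : TauMonotonic p f Z) : Y = Z := by
  set M := Nat.log p N + 1 with hMdef
  have hM0 : 0 < M := by omega
  have hNM : N < p ^ M := Nat.lt_pow_succ_log_self hp N
  have hYlt : ∀ i, Y i < p ^ M := fun i =>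
    lt_of_le_of_lt (hY.1.1.1 ▸ Finset.single_le_sum (f := Y) (fun _ _ => Nat.zero_le _)
      (Finset.mem_univ i)) hNM
  have hZlt : ∀ i, Z i < p ^ M := fun i =>
    lt_of_le_of_lt (hZ.1.1.1 ▸ Finset.single_le_sum (f := Z) (fun _ _ => Nat.zero_le _)
      (Finset.mem_univ i)) hNM
  have hpre : ∀ k j, (∑ i : Fin d, if (i : ℕ) < k then Dc p f M (Y i) j else 0)
      = ∑ i : Fin d, if (i : ℕ) < k then Dc p f M (Z i) j else 0 := fun k j =>
    (tau_F hp hf hM0 hNM hY hτY k j).trans (tau_F hp hf hM0 hNM hZ hτZ k j).symm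
  have hDc : ∀ (i : Fin d) (j : ℕ), Dc p f M (Y i) j = Dc p f M (Z i) j := by
    intro i j
    have h1 := hpre ((i : ℕ) + 1) j
    have h2 := hpre (i : ℕ) j
    rw [fin_sum_step (fun i' => Dc p f M (Y i') j) i,
      fin_sum_step (fun i' => Dc p f M (Z i') j) i] at h1
    omega
  have hdgt : ∀ (i : Fin d) (j : ℕ), dgt p (Y i) j = dgt p (Z i) j := by
    intro i j
    have h1 := Dc_step hp hf (hYlt i) j
    have h2 := Dc_step hp hf (hZlt i) j
    have h3 := hDc i j
    have h4 := hDc i (j + f)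
    omega
  funext i
  rw [← val_dgt hp (hYlt i), ← val_dgt hp (hZlt i)]
  unfold val
  refine Finset.sum_congr rfl fun j _ => ?_
  show dgt p (Y i) j * p ^ j = dgt p (Z i) j * p ^ j
  rw [hdgt i j]

lemma swap_lemma {p f d N : ℕ} (hp : 1 < p) (hf : 0 < f)
    {B : Fin d → Fin f → ℕ} {Y : Fin d → ℕ}
    (hY : Y ∈ WBset p f d N B) (hτ : ¬ TauMonotonic p f Y) :
    ∃ Y' ∈ WBset p f d N B, LexLT Y Y' ∧ wtW Y' < wtW Y := by
  obtain ⟨⟨⟨hsum, hcol⟩, hmem⟩, hGam⟩ := hY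
  have hcol' : ∀ t, (∑ k : Fin d, dgt p (Y k) t) = dgt p N t := hcol
  unfold TauMonotonic at hτ
  push_neg at hτ
  obtain ⟨i, j, hij, m, n, him, hjn, hclass, hmn⟩ := hτ
  have him' : dgt p (Y i) m ≠ 0 := him
  have hjn' : dgt p (Y j) n ≠ 0 := hjn
  have hne : i ≠ j := Fin.ne_of_lt hij
  have hijv : (i : ℕ) < (j : ℕ) := hij
  set M := Nat.log p N + 1 with hMdef
  have hM0 : 0 < M := by omega
  have hNM : N < p ^ M := Nat.lt_pow_succ_log_self hp N
  have hYle : ∀ k, Y k ≤ N := fun k =>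
    hsum ▸ Finset.single_le_sum (f := Y) (fun _ _ => Nat.zero_le _) (Finset.mem_univ k)
  have hYlt : ∀ k, Y k < p ^ M := fun k => lt_of_le_of_lt (hYle k) hNM
  have hdM : ∀ (k : Fin d) (t : ℕ), M ≤ t → dgt p (Y k) t = 0 := fun k t h =>
    dgt_eq_zero (lt_of_lt_of_le (hYlt k) (Nat.pow_le_pow_right (by omega) h))
  have hmM : m < M := by
    by_contra h
    exact him' (hdM i m (by omega))
  have hnM : n < M := by
    by_contra h
    exact hjn' (hdM j n (by omega))
  have hpair : ∀ t, dgt p (Y i) t + dgt p (Y j) t ≤ dgt p N t := by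
    intro t
    calc dgt p (Y i) t + dgt p (Y j) t
        = ∑ k ∈ ({i, j} : Finset (Fin d)), dgt p (Y k) t := (Finset.sum_pair (f := fun k => dgt p (Y k) t) hne).symm
      _ ≤ ∑ k : Fin d, dgt p (Y k) t :=
          Finset.sum_le_sum_of_subset (Finset.subset_univ _)
      _ = dgt p N t := hcol' t
  have hidm : 1 ≤ dgt p (Y i) m := by omega
  have hjdn : 1 ≤ dgt p (Y j) n := by omega
  have hbin : dgt p (Y i) n + 1 < p := by
    have h1 := hpair n
    have h2 := dgt_lt hp N n
    omega
  have hbjm : dgt p (Y j) m + 1 < p := by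
    have h1 := hpair m
    have h2 := dgt_lt hp N m
    omega
  have hmnne : m ≠ n := by omega
  set bi' := swapFn (dgt p (Y i)) m n with hbi'def
  set bj' := swapFn (dgt p (Y j)) n m with hbj'def
  have hbi'lt : ∀ t, bi' t < p := by
    intro t
    rw [hbi'def]
    unfold swapFn
    split_ifs
    · have := dgt_lt hp (Y i) m
      omega
    · exact hbin
    · exact dgt_lt hp _ _
  have hbj'lt : ∀ t, bj' t < p := by
    intro t
    rw [hbj'def]
    unfold swapFn
    split_ifs
    · have := dgt_lt hp (Y j) n
      omega
    · exact hbjm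
    · exact dgt_lt hp _ _
  set Yi' := val p bi' M with hYi'def
  set Yj' := val p bj' M with hYj'def
  set Y' : Fin d → ℕ := fun k => if k = i then Yi' else if k = j then Yj' else Y k with hY'def
  have hY'i : Y' i = Yi' := by simp [hY'def]
  have hY'j : Y' j = Yj' := by simp [hY'def, hne.symm]
  have hY'k : ∀ k, k ≠ i → k ≠ j → Y' k = Y k := by
    intro k h1 h2
    simp [hY'def, h1, h2]
  have hYi'dgt : ∀ t, dgt p Yi' t = bi' t := by
    intro t
    rcases lt_or_ge t M with h | h
    · rw [hYi'def, dgt_val hp hbi'lt, if_pos h]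
    · rw [hYi'def, dgt_val hp hbi'lt, if_neg (by omega)]
      rw [hbi'def]
      unfold swapFn
      rw [if_neg (by omega), if_neg (by omega)]
      exact (hdM i t h).symm
  have hYj'dgt : ∀ t, dgt p Yj' t = bj' t := by
    intro t
    rcases lt_or_ge t M with h | h
    · rw [hYj'def, dgt_val hp hbj'lt, if_pos h]
    · rw [hYj'def, dgt_val hp hbj'lt, if_neg (by omega)]
      rw [hbj'def]
      unfold swapFn
      rw [if_neg (by omega), if_neg (by omega)]
      exact (hdM j t h).symm
  have hvi : Yi' + p ^ m = Y i + p ^ n := by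
    have h := val_swapFn (p := p) hmM hnM hmnne hidm
    rwa [val_dgt hp (hYlt i)] at h
  have hvj : Yj' + p ^ n = Y j + p ^ m := by
    have h := val_swapFn (p := p) hnM hmM (by omega) hjdn
    rwa [val_dgt hp (hYlt j)] at h
  have hpowmn : p ^ m < p ^ n := Nat.pow_lt_pow_right hp (by omega)
  have hYi'lt : Yi' < p ^ M := val_lt hp hbi'lt M
  have hYj'lt : Yj' < p ^ M := val_lt hp hbj'lt M
  have hij2 : Yi' + Yj' = Y i + Y j := by omega
  have hjmem : j ∈ (Finset.univ : Finset (Fin d)).erase i :=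
    Finset.mem_erase.mpr ⟨hne.symm, Finset.mem_univ j⟩
  have hdecomp : ∀ g : Fin d → ℕ, (∑ k : Fin d, g k)
      = g i + (g j + ∑ k ∈ ((Finset.univ : Finset (Fin d)).erase i).erase j, g k) := by
    intro g
    rw [Finset.add_sum_erase _ g hjmem, Finset.add_sum_erase _ g (Finset.mem_univ i)]
  have hrestmem : ∀ k : Fin d, k ∈ ((Finset.univ : Finset (Fin d)).erase i).erase j →
      k ≠ i ∧ k ≠ j := by
    intro k hk
    exact ⟨(Finset.mem_erase.mp (Finset.mem_erase.mp hk).2).1, (Finset.mem_erase.mp hk).1⟩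
  have hbsum : ∀ t, bi' t + bj' t = dgt p (Y i) t + dgt p (Y j) t := by
    intro t
    rw [hbi'def, hbj'def]
    unfold swapFn
    rcases eq_or_ne t m with rfl | h1
    · rw [if_pos rfl, if_neg hmnne, if_pos rfl]
      omega
    · rcases eq_or_ne t n with rfl | h2
      · rw [if_neg h1, if_pos rfl, if_pos rfl]
        omega
      · rw [if_neg h1, if_neg h2, if_neg h2, if_neg h1]
  have hsum' : (∑ k : Fin d, Y' k) = N := by
    rw [hdecomp Y', hY'i, hY'j]
    have hr : (∑ k ∈ ((Finset.univ : Finset (Fin d)).erase i).erase j, Y' k)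
        = ∑ k ∈ ((Finset.univ : Finset (Fin d)).erase i).erase j, Y k :=
      Finset.sum_congr rfl fun k hk => hY'k k (hrestmem k hk).1 (hrestmem k hk).2
    rw [hr]
    rw [hdecomp Y] at hsum
    omega
  have hcolY' : ∀ t, (∑ k : Fin d, dgt p (Y' k) t) = dgt p N t := by
    intro t
    rw [hdecomp (fun k => dgt p (Y' k) t)]
    have hr : (∑ k ∈ ((Finset.univ : Finset (Fin d)).erase i).erase j, dgt p (Y' k) t)
        = ∑ k ∈ ((Finset.univ : Finset (Fin d)).erase i).erase j, dgt p (Y k) t :=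
      Finset.sum_congr rfl fun k hk => by
        rw [hY'k k (hrestmem k hk).1 (hrestmem k hk).2]
    have hcolt := hcol' t
    rw [hdecomp (fun k => dgt p (Y k) t)] at hcolt
    simp only [hY'i, hY'j, hYi'dgt, hYj'dgt]
    rw [hr]
    have := hbsum t
    omega
  have hmodi : Yi' ≡ Y i [MOD p ^ f - 1] := by
    have hpow := pow_modEq_of_class (p := p) (f := f) (by omega) hclass
    exact Nat.ModEq.add_right_cancel hpow (hvi ▸ Nat.ModEq.refl _)
  have hmodj : Yj' ≡ Y j [MOD p ^ f - 1] := by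
    have hpow := pow_modEq_of_class (p := p) (f := f) (by omega) hclass.symm
    exact Nat.ModEq.add_right_cancel hpow (hvj ▸ Nat.ModEq.refl _)
  have hijd : (i : ℕ) + 1 < d := by
    have := j.isLt
    omega
  refine ⟨Y', ⟨⟨⟨hsum', hcolY'⟩, ?_⟩, ?_⟩, ?_, ?_⟩
  · -- positivity and divisibility
    intro k hk
    by_cases hki : k = i
    · subst hki
      rw [hY'i]
      constructor
      · omega
      · have hidvd : (p ^ f - 1) ∣ Y k := (hmem k hijd).2
        exact Nat.modEq_zero_iff_dvd.mp (hmodi.trans (Nat.modEq_zero_iff_dvd.mpr hidvd))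
    · by_cases hkj : k = j
      · subst hkj
        rw [hY'j]
        constructor
        · have hterm : bj' m * p ^ m ≤ Yj' := by
            rw [hYj'def]
            exact Finset.single_le_sum (f := fun t => bj' t * p ^ t)
              (fun _ _ => Nat.zero_le _) (Finset.mem_range.mpr hmM)
          have hbm : 1 ≤ bj' m := by
            rw [hbj'def]
            unfold swapFn
            rw [if_neg (by omega), if_pos rfl]
            omega
          have hppos : 0 < p ^ m := pow_pos (by omega : 0 < p) m
          have : 1 * p ^ m ≤ bj' m * p ^ m := Nat.mul_le_mul_right _ hbm
          omega
        · have hjdvd : (p ^ f - 1) ∣ Y k := (hmem k hk).2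
          exact Nat.modEq_zero_iff_dvd.mp (hmodj.trans (Nat.modEq_zero_iff_dvd.mpr hjdvd))
      · rw [hY'k k hki hkj]
        exact hmem k hk
  · -- Gamma
    intro k
    by_cases hki : k = i
    · subst hki
      funext r
      rw [hY'i, gamma_eq hp hM0 hYi'lt r]
      have hstep : (∑ t ∈ Finset.range M, if t % f = (r : ℕ) then dgt p Yi' t else 0)
          = ∑ t ∈ Finset.range M, if t % f = (r : ℕ) then dgt p (Y k) t else 0 := by
        simp only [hYi'dgt]
        exact sum_swapFn_ite hmM hnM hmnne hidm hclass (r : ℕ)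
      rw [hstep, ← gamma_eq hp hM0 (hYlt k) r, hGam k]
    · by_cases hkj : k = j
      · subst hkj
        funext r
        rw [hY'j, gamma_eq hp hM0 hYj'lt r]
        have hstep : (∑ t ∈ Finset.range M, if t % f = (r : ℕ) then dgt p Yj' t else 0)
            = ∑ t ∈ Finset.range M, if t % f = (r : ℕ) then dgt p (Y k) t else 0 := by
          simp only [hYj'dgt]
          exact sum_swapFn_ite hnM hmM (by omega) hjdn hclass.symm (r : ℕ)
        rw [hstep, ← gamma_eq hp hM0 (hYlt k) r, hGam k]
      · rw [hY'k k hki hkj]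
        exact hGam k
  · -- LexLT
    refine ⟨i, fun k hk => ?_, ?_⟩
    · exact (hY'k k (Fin.ne_of_lt hk) (Fin.ne_of_lt (hk.trans hij))).symm
    · rw [hY'i]
      omega
  · -- weight
    unfold wtW
    rw [hdecomp (fun k => ((k : ℕ) + 1) * Y' k), hdecomp (fun k => ((k : ℕ) + 1) * Y k)]
    have hr : (∑ k ∈ ((Finset.univ : Finset (Fin d)).erase i).erase j, ((k : ℕ) + 1) * Y' k)
        = ∑ k ∈ ((Finset.univ : Finset (Fin d)).erase i).erase j, ((k : ℕ) + 1) * Y k :=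
      Finset.sum_congr rfl fun k hk => by
        rw [hY'k k (hrestmem k hk).1 (hrestmem k hk).2]
    rw [hr, hY'i, hY'j]
    set u := p ^ n - p ^ m with hudef
    have hu : 0 < u := by omega
    have e1 : Yi' = Y i + u := by omega
    have e2 : Y j = Yj' + u := by omega
    rw [e1, e2, Nat.mul_add, Nat.mul_add]
    have hmul : ((i : ℕ) + 1) * u < ((j : ℕ) + 1) * u :=
      Nat.mul_lt_mul_of_lt_of_le (by omega) le_rfl hu
    omega

lemma main_exists {p f : ℕ} (hp : 1 < p) (hf : 0 < f) (N d : ℕ)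
    (B : Fin d → Fin f → ℕ) (hB : (WBset p f d N B).Nonempty) :
    ∃ Z ∈ WBset p f d N B, TauMonotonic p f Z ∧
      (∀ Y ∈ WBset p f d N B, TauMonotonic p f Y → Y = Z) ∧
      (∀ Y ∈ WBset p f d N B, Y ≠ Z → LexLT Y Z ∧ wtW Z < wtW Y) := by
  obtain ⟨Y₀, hY₀⟩ := hB
  set S : Set ℕ := {w | ∃ Y ∈ WBset p f d N B, wtW Y = w} with hS
  have hSne : S.Nonempty := ⟨wtW Y₀, Y₀, hY₀, rfl⟩
  obtain ⟨Z, hZ, hZw⟩ := Nat.sInf_mem hSne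
  have hZmin : ∀ Y ∈ WBset p f d N B, wtW Z ≤ wtW Y := by
    intro Y hYm
    rw [hZw]
    exact Nat.sInf_le ⟨Y, hYm, rfl⟩
  have hτZ : TauMonotonic p f Z := by
    by_contra hc
    obtain ⟨Y', hY', _, hw⟩ := swap_lemma hp hf hZ hc
    exact absurd (hZmin Y' hY') (by omega)
  have huniq : ∀ Y ∈ WBset p f d N B, TauMonotonic p f Y → Y = Z := fun Y hYm ht =>
    tau_unique hp hf hYm hZ ht hτZ
  have hmain : ∀ w, ∀ Y ∈ WBset p f d N B, wtW Y = w → Y ≠ Z → LexLT Y Z ∧ wtW Z < wtW Y := by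
    intro w
    induction w using Nat.strong_induction_on with
    | _ w ih =>
      intro Y hYm hw hne
      have hτY : ¬ TauMonotonic p f Y := fun ht => hne (huniq Y hYm ht)
      obtain ⟨Y', hY'm, hlex, hwlt⟩ := swap_lemma hp hf hYm hτY
      have hwZ : wtW Z < wtW Y := lt_of_le_of_lt (hZmin Y' hY'm) (hw ▸ hwlt)
      refine ⟨?_, hwZ⟩
      rcases eq_or_ne Y' Z with rfl | hne'
      · exact hlex
      · exact lexLT_trans hlex (ih (wtW Y') (by omega) Y' hY'm rfl hne').1
  exact ⟨Z, hZ, hτZ, huniq, fun Y hYm hne => hmain (wtW Y) Y hYm rfl hne⟩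

end TauAux

/-- each `W_d^B(N)` (for a valid matrix `B`) contains a unique τ-monotonic
composition; it is lexicographically largest and of strictly smallest weight in `W_d^B(N)`.
In particular modest and optimal compositions are τ-monotonic. -/
theorem tau_monotonic_unique
    (p f : ℕ) (hp : p.Prime) (hf : 0 < f) (N d : ℕ) (hN : 0 < N) (hd : 0 < d)
    (B : Fin d → Fin f → ℕ) (hB : (WBset p f d N B).Nonempty) :
    (∃ Z ∈ WBset p f d N B, TauMonotonic p f Z ∧
      (∀ Y ∈ WBset p f d N B, TauMonotonic p f Y → Y = Z) ∧
      (∀ Y ∈ WBset p f d N B, Y ≠ Z → LexLT Y Z ∧ wtW Z < wtW Y)) ∧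
    (∀ Z : Fin d → ℕ, Modest p (p ^ f) N Z ∨ Optimal p (p ^ f) N Z →
      TauMonotonic p f Z) := by
  constructor
  · exact TauAux.main_exists hp.one_lt hf N d B hB
  · intro Z hZ
    have hZW : Z ∈ Wset p (p ^ f) d N := by
      rcases hZ with h | h
      · exact h.1
      · exact h.1
    have hZB : Z ∈ WBset p f d N (fun j => Gamma p f (Z j)) := ⟨hZW, fun j => rfl⟩
    obtain ⟨Z₀, hZ₀m, hτ₀, huniq, hprop⟩ :=
      TauAux.main_exists hp.one_lt hf N d (fun j => Gamma p f (Z j)) ⟨Z, hZB⟩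
    rcases eq_or_ne Z Z₀ with rfl | hne
    · exact hτ₀
    · exfalso
      obtain ⟨hlex, hwlt⟩ := hprop Z hZB hne
      rcases hZ with hMod | hOpt
      · rcases hMod.2 Z₀ hZ₀m.1 with heq | hlt
        · exact hne heq.symm
        · exact TauAux.lexLT_irrefl (TauAux.lexLT_trans hlex hlt)
      · have := hOpt.2 Z₀ hZ₀m.1
        omega
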